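/- Let λ > 2 and let f₁ : (−1, ∞) → ℂ and f₂ : (−∞, 1) → ℂ be continuous and satisfy the two relations f₁(x) = (λ+x)^{−2s}f₁(−1/(λ+x)) + f₁(x+λ) + (λ+x)^{−2s}f₂(−1/(λ+x)) on (−1,∞) and f₂(x) = (λ−x)^{−2s}f₁(1/(λ−x)) + f₂(x−λ) + (λ−x)^{−2s}f₂(1/(λ−x)) on (−∞,1), for a fixed s ∈ ℂ. Let θ⁺ = (λ+√(λ²−4))/2. Then there exist unique continuous extensions f̃₁ : (−θ⁺, ∞) → ℂ and f̃₂ : (−∞, θ⁺) → ℂ of f₁, f₂ such that (f̃₁, f̃₂) satisfies the same two relations on (−θ⁺,∞) × (−∞, θ⁺). -/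

import Mathlib

/-- Auxiliary sequence `a 0 = -1`, `a (n+1) = -1/(a n) - lam`, decreasing to `-θ⁺`. -/
noncomputable def statement17aux_a (lam : ℝ) : ℕ → ℝ :=
  fun n => Nat.rec (-1 : ℝ) (fun _ x => -1 / x - lam) n

/-- Auxiliary iterated extension operator for the first relation. -/
noncomputable def statement17aux_h (lam : ℝ) (s : ℂ) (f₁ f₂ : ℝ → ℂ) : ℕ → ℝ → ℂ :=
  fun n => Nat.rec f₁ (fun _ g x =>
    if -1 < x then f₁ x else
      ((lam + x : ℝ) : ℂ) ^ (-2 * s) * g (-1 / (lam + x)) + f₁ (x + lam)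
        + ((lam + x : ℝ) : ℂ) ^ (-2 * s) * f₂ (-1 / (lam + x))) n

/-- Half of the extension problem: extend `f₁` from `(-1,∞)` to `(-θ⁺,∞)` using the
first relation (whose `f₂`-argument always lies in `(-θ⁺,0) ⊆ (-∞,1)`). -/
lemma statement17_half (lam : ℝ) (hlam : 2 < lam) (θp : ℝ) (hθ1 : 1 < θp)
    (hθ2 : θp * θp = lam * θp - 1) (s : ℂ) (f₁ f₂ : ℝ → ℂ)
    (hc1 : ContinuousOn f₁ (Set.Ioi (-1 : ℝ)))
    (hc2 : ContinuousOn f₂ (Set.Iio (1 : ℝ)))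
    (h1 : ∀ x ∈ Set.Ioi (-1 : ℝ),
      f₁ x = ((lam + x : ℝ) : ℂ) ^ (-2 * s) * f₁ (-1 / (lam + x))
          + f₁ (x + lam)
          + ((lam + x : ℝ) : ℂ) ^ (-2 * s) * f₂ (-1 / (lam + x))) :
    ∃ g : ℝ → ℂ,
      ContinuousOn g (Set.Ioi (-θp)) ∧
      (∀ x ∈ Set.Ioi (-1 : ℝ), g x = f₁ x) ∧
      (∀ x ∈ Set.Ioi (-θp),
        g x = ((lam + x : ℝ) : ℂ) ^ (-2 * s) * g (-1 / (lam + x))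
            + g (x + lam)
            + ((lam + x : ℝ) : ℂ) ^ (-2 * s) * f₂ (-1 / (lam + x))) ∧
      ∀ g' : ℝ → ℂ,
        (∀ x ∈ Set.Ioi (-1 : ℝ), g' x = f₁ x) →
        (∀ x ∈ Set.Ioi (-θp),
          g' x = ((lam + x : ℝ) : ℂ) ^ (-2 * s) * g' (-1 / (lam + x))
              + g' (x + lam)
              + ((lam + x : ℝ) : ℂ) ^ (-2 * s) * f₂ (-1 / (lam + x))) →
        ∀ x ∈ Set.Ioi (-θp), g' x = g x := by
  set a := statement17aux_a lam with ha_def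
  set h := statement17aux_h lam s f₁ f₂ with hh_def
  have ea0 : a 0 = -1 := rfl
  have eas : ∀ k, a (k + 1) = -1 / a k - lam := fun _ => rfl
  have eh0 : ∀ x, h 0 x = f₁ x := fun _ => rfl
  have ehs : ∀ n x, h (n + 1) x =
      if -1 < x then f₁ x else
        ((lam + x : ℝ) : ℂ) ^ (-2 * s) * h n (-1 / (lam + x)) + f₁ (x + lam)
          + ((lam + x : ℝ) : ℂ) ^ (-2 * s) * f₂ (-1 / (lam + x)) := fun _ _ => rfl
  have hθ0 : (0 : ℝ) < θp := by linarith
  have hθne : θp ≠ 0 := ne_of_gt hθ0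
  have hinv : lam - θp = 1 / θp := by
    field_simp
    nlinarith [hθ2]
  have hinvpos : (0 : ℝ) < 1 / θp := by positivity
  have key : ∀ u v : ℝ, u < v → v < 0 → 1 / v < 1 / u := by
    intro u v huv hv
    have hu : u < 0 := huv.trans hv
    have hprod : 0 < u * v := mul_pos_of_neg_of_neg hu hv
    have hu0 : u ≠ 0 := ne_of_lt hu
    have hv0 : v ≠ 0 := ne_of_lt hv
    have he : 1 / v - 1 / u = (u - v) / (u * v) := by
      rw [div_sub_div _ _ hv0 hu0, one_mul, mul_one, mul_comm v u]
    have h2 : (u - v) / (u * v) < 0 := div_neg_of_neg_of_pos (by linarith) hprod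
    linarith [he, h2]
  have ha : ∀ n, -θp < a n ∧ a n ≤ -1 := by
    intro n
    induction n with
    | zero => rw [ea0]; exact ⟨by linarith, le_refl _⟩
    | succ n ih =>
      obtain ⟨hlo, hhi⟩ := ih
      have han : a n < 0 := by linarith
      rw [eas]
      constructor
      · have h1' : 1 / θp < 1 / (-a n) := by
          apply one_div_lt_one_div_of_lt (by linarith) (by linarith)
        have h2' : -1 / a n = 1 / (-a n) := by
          rw [div_neg, neg_div]
        linarith
      · have h3' : -1 / a n ≤ 1 := by
          rw [div_le_iff_of_neg han]
          linarith
        linarith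
  have hapos : ∀ n, a n < 0 := fun n => lt_of_le_of_lt (ha n).2 (by norm_num)
  have hdec : ∀ n, a (n + 1) < a n := by
    intro n
    induction n with
    | zero =>
      rw [eas, ea0]
      norm_num
      linarith
    | succ n ih =>
      have h1' : 1 / a n < 1 / a (n + 1) := key _ _ ih (hapos n)
      rw [eas (n + 1)]
      calc -1 / a (n + 1) - lam < -1 / a n - lam := by
            have h2' : -1 / a n = -(1 / a n) := by ring
            have h3' : -1 / a (n + 1) = -(1 / a (n + 1)) := by ring
            rw [h2', h3']; linarith
        _ = a (n + 1) := (eas n).symm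
  have hmono : ∀ n m, n ≤ m → a m ≤ a n :=
    fun n m hnm => antitone_nat_of_succ_le (fun k => (hdec k).le) hnm
  have hgeo : ∀ n, a n + θp ≤ (θp - 1) / θp ^ n := by
    intro n
    induction n with
    | zero => rw [ea0]; simp
    | succ n ih =>
      have hlo := (ha n).1
      have hhi := (ha n).2
      have han : a n < 0 := hapos n
      have hane : a n ≠ 0 := ne_of_lt han
      have e1 : a (n + 1) + θp = (a n + θp) / (-(a n * θp)) := by
        rw [eq_div_iff (by nlinarith : -(a n * θp) ≠ 0), eas]
        field_simp
        linear_combination (-(a n)) * hθ2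
      have hb1 : θp ≤ -(a n * θp) := by nlinarith
      have hstep1 : (a n + θp) / (-(a n * θp)) ≤ (a n + θp) / θp :=
        div_le_div_of_nonneg_left (by linarith) hθ0 hb1
      have hstep2 : (a n + θp) / θp ≤ ((θp - 1) / θp ^ n) / θp :=
        div_le_div_of_nonneg_right ih hθ0.le
      have e2 : ((θp - 1) / θp ^ n) / θp = (θp - 1) / θp ^ (n + 1) := by
        rw [div_div, ← pow_succ]
      rw [e1]
      rw [e2] at hstep2
      linarith
  have hcover : ∀ x, -θp < x → ∃ n, a n < x := by
    intro x hx
    obtain ⟨n, hn⟩ := pow_unbounded_of_one_lt ((θp - 1) / (x + θp)) hθ1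
    refine ⟨n, ?_⟩
    have hxθ : 0 < x + θp := by linarith
    have hpow : 0 < θp ^ n := pow_pos hθ0 n
    have : (θp - 1) / θp ^ n < x + θp := by
      rw [div_lt_iff₀ hpow]
      rw [div_lt_iff₀ hxθ] at hn
      nlinarith
    linarith [hgeo n]
  have hposθ : ∀ x, -θp < x → 1 / θp < lam + x := by
    intro x hx; linarith [hinv]
  have hpos : ∀ x, -θp < x → 0 < lam + x := fun x hx =>
    lt_trans hinvpos (hposθ x hx)
  have hargneg : ∀ x, -θp < x → -1 / (lam + x) < 0 :=
    fun x hx => div_neg_of_neg_of_pos (by norm_num) (hpos x hx)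
  have hargθ : ∀ x, -θp < x → -θp < -1 / (lam + x) := by
    intro x hx
    have h1' : 1 / (lam + x) < 1 / (1 / θp) :=
      one_div_lt_one_div_of_lt hinvpos (hposθ x hx)
    have h2' : 1 / (1 / θp) = θp := one_div_one_div θp
    have h3' : -1 / (lam + x) = -(1 / (lam + x)) := by ring
    rw [h3']
    linarith
  have harg : ∀ n x, a (n + 1) < x → a n < -1 / (lam + x) := by
    intro n x hx
    have hxθ : -θp < x := lt_trans (ha (n + 1)).1 hx
    have hpx : 0 < lam + x := hpos x hxθ
    have han : a n < 0 := hapos n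
    have h1' : -1 / a n = 1 / (-a n) := by rw [div_neg, neg_div]
    have h2' : 1 / (-a n) < lam + x := by
      rw [eas] at hx
      linarith
    have h3' : a n * (lam + x) < -1 := by
      have h4' : (-a n) * (1 / (-a n)) = 1 := mul_one_div_cancel (by linarith)
      nlinarith
    rw [lt_div_iff₀ hpx]
    linarith
  have hagree : ∀ n x, -1 < x → h n x = f₁ x := by
    intro n x hx
    cases n with
    | zero => rw [eh0]
    | succ n => rw [ehs, if_pos hx]
  have hargm1 : ∀ x : ℝ, -1 < x → -1 < -1 / (lam + x) := by
    intro x hx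
    have hp : (0:ℝ) < lam + x := by linarith
    have h1' : 1 / (lam + x) < 1 / 1 := one_div_lt_one_div_of_lt one_pos (by linarith)
    have h2' : -1 / (lam + x) = -(1 / (lam + x)) := by ring
    rw [h2']
    norm_num at h1' ⊢
    linarith
  have hrel : ∀ n x,
      h (n + 1) x = ((lam + x : ℝ) : ℂ) ^ (-2 * s) * h n (-1 / (lam + x)) + f₁ (x + lam)
        + ((lam + x : ℝ) : ℂ) ^ (-2 * s) * f₂ (-1 / (lam + x)) := by
    intro n x
    by_cases hxx : -1 < x
    · rw [ehs, if_pos hxx, h1 x hxx, hagree n _ (hargm1 x hxx)]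
    · rw [ehs, if_neg hxx]
  have hstab : ∀ n x, a n < x → h (n + 1) x = h n x := by
    intro n
    induction n with
    | zero =>
      intro x hx
      rw [ea0] at hx
      rw [hagree 1 x hx, hagree 0 x hx]
    | succ n ih =>
      intro x hx
      by_cases hxx : -1 < x
      · rw [hagree _ _ hxx, hagree _ _ hxx]
      · rw [hrel (n + 1) x, hrel n x, ih _ (harg n x hx)]
  have hstab' : ∀ n m x, n ≤ m → a n < x → h m x = h n x := by
    intro n m x hnm
    induction m with
    | zero =>
      intro hx
      have hn0 : n = 0 := by omega
      rw [hn0]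
    | succ m ih =>
      intro hx
      rcases Nat.lt_or_ge n (m + 1) with hlt | hge
      · have hnm' : n ≤ m := by omega
        have hx' : a m < x := lt_of_le_of_lt (hmono n m hnm') hx
        rw [hstab m x hx', ih hnm' hx]
      · have hn : n = m + 1 := by omega
        rw [hn]
  have hcont : ∀ n, ContinuousOn (h n) (Set.Ioi (a n)) := by
    intro n
    induction n with
    | zero =>
      have : h 0 = f₁ := rfl
      rw [this, ea0]
      exact hc1
    | succ n ih =>
      intro x hx
      have hx : a (n + 1) < x := hx
      have hxθ : -θp < x := lt_trans (ha (n + 1)).1 hx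
      have hpx : 0 < lam + x := hpos x hxθ
      have hbase : ContinuousAt (fun y : ℝ => ((lam + y : ℝ) : ℂ)) x :=
        (Complex.continuous_ofReal.comp (continuous_const.add continuous_id)).continuousAt
      have hcpow : ContinuousAt (fun y : ℝ => ((lam + y : ℝ) : ℂ) ^ (-2 * s)) x := by
        apply hbase.cpow continuousAt_const
        exact Complex.ofReal_mem_slitPlane.2 hpx
      have hmapc : ContinuousAt (fun y : ℝ => -1 / (lam + y)) x :=
        ContinuousAt.div continuousAt_const
          ((continuous_const.add continuous_id).continuousAt) (ne_of_gt hpx)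
      have hhn : ContinuousAt (h n) (-1 / (lam + x)) :=
        ih.continuousAt (Ioi_mem_nhds (harg n x hx))
      have hf1c : ContinuousAt f₁ (x + lam) :=
        hc1.continuousAt (Ioi_mem_nhds (by linarith [hposθ x hxθ, hinvpos] : (-1:ℝ) < x + lam))
      have hf2c : ContinuousAt f₂ (-1 / (lam + x)) :=
        hc2.continuousAt (Iio_mem_nhds (lt_trans (hargneg x hxθ) one_pos))
      have hhn' : ContinuousAt (fun y : ℝ => h n (-1 / (lam + y))) x :=
        ContinuousAt.comp hhn hmapc
      have hf1' : ContinuousAt (fun y : ℝ => f₁ (y + lam)) x :=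
        ContinuousAt.comp hf1c ((continuous_id.add continuous_const).continuousAt)
      have hf2' : ContinuousAt (fun y : ℝ => f₂ (-1 / (lam + y))) x :=
        ContinuousAt.comp hf2c hmapc
      have hR : ContinuousAt (fun y : ℝ =>
          ((lam + y : ℝ) : ℂ) ^ (-2 * s) * h n (-1 / (lam + y)) + f₁ (y + lam)
            + ((lam + y : ℝ) : ℂ) ^ (-2 * s) * f₂ (-1 / (lam + y))) x :=
        ((hcpow.mul hhn').add hf1').add (hcpow.mul hf2')
      have hev : ∀ᶠ y in nhds x, (fun y : ℝ =>
          ((lam + y : ℝ) : ℂ) ^ (-2 * s) * h n (-1 / (lam + y)) + f₁ (y + lam)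
            + ((lam + y : ℝ) : ℂ) ^ (-2 * s) * f₂ (-1 / (lam + y))) y = h (n + 1) y := by
        filter_upwards [Ioi_mem_nhds hx] with y hy
        exact (hrel n y).symm
      exact (hR.congr hev).continuousWithinAt
  classical
  set g : ℝ → ℂ := fun x => if hx : ∃ n, a n < x then h (Nat.find hx) x else 0 with hg_def
  have hg : ∀ n x, a n < x → g x = h n x := by
    intro n x hx
    have hex : ∃ m, a m < x := ⟨n, hx⟩
    have hk : a (Nat.find hex) < x := Nat.find_spec hex
    have e1 : g x = h (Nat.find hex) x := dif_pos hex
    have e2 : h (max n (Nat.find hex)) x = h (Nat.find hex) x :=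
      hstab' _ _ x (le_max_right _ _) hk
    have e3 : h (max n (Nat.find hex)) x = h n x :=
      hstab' _ _ x (le_max_left _ _) hx
    rw [e1, ← e2, e3]
  have hgf : ∀ x ∈ Set.Ioi (-1 : ℝ), g x = f₁ x := by
    intro x hx
    rw [hg 0 x (by rw [ea0]; exact hx), eh0]
  have hgθ : ∀ x, -θp < x → -1 < x + lam := by
    intro x hx
    linarith [hposθ x hx, hinvpos]
  have hgrel : ∀ x ∈ Set.Ioi (-θp),
      g x = ((lam + x : ℝ) : ℂ) ^ (-2 * s) * g (-1 / (lam + x)) + g (x + lam)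
          + ((lam + x : ℝ) : ℂ) ^ (-2 * s) * f₂ (-1 / (lam + x)) := by
    intro x hx
    obtain ⟨n, hn⟩ := hcover x hx
    have hn1 : a (n + 1) < x := lt_trans (hdec n) hn
    rw [hg (n + 1) x hn1, hrel n x, ← hg n _ (harg n x hn1),
      ← hgf (x + lam) (hgθ x hx)]
  refine ⟨g, ?_, hgf, hgrel, ?_⟩
  · -- continuity
    intro x hx
    obtain ⟨n, hn⟩ := hcover x hx
    have hcn : ContinuousAt (h n) x := (hcont n).continuousAt (Ioi_mem_nhds hn)
    have hev : ∀ᶠ y in nhds x, h n y = g y := by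
      filter_upwards [Ioi_mem_nhds hn] with y hy
      exact (hg n y hy).symm
    exact (hcn.congr hev).continuousWithinAt
  · -- uniqueness
    intro g' hA hB
    have claim : ∀ n x, a n < x → g' x = g x := by
      intro n
      induction n with
      | zero =>
        intro x hx
        rw [ea0] at hx
        rw [hA x hx, hgf x hx]
      | succ n ih =>
        intro x hx
        by_cases hxx : -1 < x
        · rw [hA x hxx, hgf x hxx]
        · have hxθ : -θp < x := lt_trans (ha (n + 1)).1 hx
          rw [hB x hxθ, hgrel x hxθ, ih _ (harg n x hx),
            hA (x + lam) (hgθ x hxθ), hgf (x + lam) (hgθ x hxθ)]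
    intro x hx
    obtain ⟨n, hn⟩ := hcover x hx
    exact claim n x hn
theorem statement17 (lam : ℝ) (hlam : 2 < lam) (s : ℂ) (f₁ f₂ : ℝ → ℂ)
    (hc1 : ContinuousOn f₁ (Set.Ioi (-1 : ℝ)))
    (hc2 : ContinuousOn f₂ (Set.Iio (1 : ℝ)))
    (h1 : ∀ x ∈ Set.Ioi (-1 : ℝ),
      f₁ x = ((lam + x : ℝ) : ℂ) ^ (-2 * s) * f₁ (-1 / (lam + x))
          + f₁ (x + lam)
          + ((lam + x : ℝ) : ℂ) ^ (-2 * s) * f₂ (-1 / (lam + x)))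
    (h2 : ∀ x ∈ Set.Iio (1 : ℝ),
      f₂ x = ((lam - x : ℝ) : ℂ) ^ (-2 * s) * f₁ (1 / (lam - x))
          + f₂ (x - lam)
          + ((lam - x : ℝ) : ℂ) ^ (-2 * s) * f₂ (1 / (lam - x))) :
    let θp : ℝ := (lam + Real.sqrt (lam ^ 2 - 4)) / 2
    let Ext : (ℝ → ℂ) → (ℝ → ℂ) → Prop := fun g₁ g₂ =>
      ContinuousOn g₁ (Set.Ioi (-θp)) ∧ ContinuousOn g₂ (Set.Iio θp) ∧
      (∀ x ∈ Set.Ioi (-1 : ℝ), g₁ x = f₁ x) ∧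
      (∀ x ∈ Set.Iio (1 : ℝ), g₂ x = f₂ x) ∧
      (∀ x ∈ Set.Ioi (-θp),
        g₁ x = ((lam + x : ℝ) : ℂ) ^ (-2 * s) * g₁ (-1 / (lam + x))
            + g₁ (x + lam)
            + ((lam + x : ℝ) : ℂ) ^ (-2 * s) * g₂ (-1 / (lam + x))) ∧
      (∀ x ∈ Set.Iio θp,
        g₂ x = ((lam - x : ℝ) : ℂ) ^ (-2 * s) * g₁ (1 / (lam - x))
            + g₂ (x - lam)
            + ((lam - x : ℝ) : ℂ) ^ (-2 * s) * g₂ (1 / (lam - x)))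
    ∃ g₁ g₂ : ℝ → ℂ, Ext g₁ g₂ ∧
      ∀ g₁' g₂' : ℝ → ℂ, Ext g₁' g₂' →
        (∀ x ∈ Set.Ioi (-θp), g₁' x = g₁ x) ∧ (∀ x ∈ Set.Iio θp, g₂' x = g₂ x) := by
  intro θp Ext
  have hd : (0 : ℝ) ≤ lam ^ 2 - 4 := by nlinarith
  have hsq : Real.sqrt (lam ^ 2 - 4) ^ 2 = lam ^ 2 - 4 := Real.sq_sqrt hd
  have hsn : 0 ≤ Real.sqrt (lam ^ 2 - 4) := Real.sqrt_nonneg _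
  have hθp : θp = (lam + Real.sqrt (lam ^ 2 - 4)) / 2 := rfl
  have hθ1 : 1 < θp := by rw [hθp]; linarith
  have hθ2 : θp * θp = lam * θp - 1 := by rw [hθp]; linear_combination hsq / 4
  have hθ0 : (0 : ℝ) < θp := by linarith
  have hinv : lam - θp = 1 / θp := by
    field_simp
    linear_combination -hθ2
  have hinvpos : (0 : ℝ) < 1 / θp := by positivity
  have hpos : ∀ x : ℝ, -θp < x → 0 < lam + x := by
    intro x hx; linarith [hinv, hinvpos]
  -- first coordinate
  obtain ⟨g₁, hg₁c, hg₁f, hg₁rel, hg₁uniq⟩ :=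
    statement17_half lam hlam θp hθ1 hθ2 s f₁ f₂ hc1 hc2 h1
  -- second coordinate, by the symmetry x ↦ -x which swaps the two relations
  have hFc1 : ContinuousOn (fun y : ℝ => f₂ (-y)) (Set.Ioi (-1 : ℝ)) := by
    apply hc2.comp continuous_neg.continuousOn
    intro y hy
    simp only [Set.mem_Ioi] at hy
    simp only [Set.mem_Iio]
    linarith
  have hFc2 : ContinuousOn (fun y : ℝ => f₁ (-y)) (Set.Iio (1 : ℝ)) := by
    apply hc1.comp continuous_neg.continuousOn
    intro y hy
    simp only [Set.mem_Iio] at hy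
    simp only [Set.mem_Ioi]
    linarith
  have hF1 : ∀ x ∈ Set.Ioi (-1 : ℝ),
      (fun y : ℝ => f₂ (-y)) x
        = ((lam + x : ℝ) : ℂ) ^ (-2 * s) * (fun y : ℝ => f₂ (-y)) (-1 / (lam + x))
          + (fun y : ℝ => f₂ (-y)) (x + lam)
          + ((lam + x : ℝ) : ℂ) ^ (-2 * s) * (fun y : ℝ => f₁ (-y)) (-1 / (lam + x)) := by
    intro x hx
    simp only [Set.mem_Ioi] at hx
    have hx' : -x ∈ Set.Iio (1 : ℝ) := by simp only [Set.mem_Iio]; linarith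
    have ht := h2 (-x) hx'
    rw [show lam - -x = lam + x from by ring] at ht
    simp only []
    rw [show -(-1 / (lam + x)) = 1 / (lam + x) from by ring,
      show -(x + lam) = -x - lam from by ring, ht]
    ring
  obtain ⟨G, hGc, hGf, hGrel, hGuniq⟩ :=
    statement17_half lam hlam θp hθ1 hθ2 s (fun y : ℝ => f₂ (-y)) (fun y : ℝ => f₁ (-y))
      hFc1 hFc2 hF1
  set g₂ : ℝ → ℂ := fun x => G (-x) with hg₂def
  have hg₂f : ∀ x ∈ Set.Iio (1 : ℝ), g₂ x = f₂ x := by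
    intro x hx
    simp only [Set.mem_Iio] at hx
    have : g₂ x = (fun y : ℝ => f₂ (-y)) (-x) :=
      hGf (-x) (by simp only [Set.mem_Ioi]; linarith)
    rw [this]
    simp only []
    rw [neg_neg]
  have hg₂c : ContinuousOn g₂ (Set.Iio θp) := by
    apply hGc.comp continuous_neg.continuousOn
    intro y hy
    simp only [Set.mem_Iio] at hy
    simp only [Set.mem_Ioi]
    linarith
  have hrel1 : ∀ x ∈ Set.Ioi (-θp),
      g₁ x = ((lam + x : ℝ) : ℂ) ^ (-2 * s) * g₁ (-1 / (lam + x))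
          + g₁ (x + lam)
          + ((lam + x : ℝ) : ℂ) ^ (-2 * s) * g₂ (-1 / (lam + x)) := by
    intro x hx
    have hx' : -θp < x := hx
    have harg : -1 / (lam + x) < 1 :=
      lt_trans (div_neg_of_neg_of_pos (by norm_num) (hpos x hx')) one_pos
    rw [show g₂ (-1 / (lam + x)) = f₂ (-1 / (lam + x)) from
      hg₂f _ (by simp only [Set.mem_Iio]; exact harg)]
    exact hg₁rel x hx
  have hrel2 : ∀ x ∈ Set.Iio θp,
      g₂ x = ((lam - x : ℝ) : ℂ) ^ (-2 * s) * g₁ (1 / (lam - x))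
          + g₂ (x - lam)
          + ((lam - x : ℝ) : ℂ) ^ (-2 * s) * g₂ (1 / (lam - x)) := by
    intro x hx
    simp only [Set.mem_Iio] at hx
    have hx' : -x ∈ Set.Ioi (-θp) := by simp only [Set.mem_Ioi]; linarith
    have hG' := hGrel (-x) hx'
    rw [show lam + -x = lam - x from by ring] at hG'
    have hlx : 0 < lam - x := by
      have := hpos (-x) (by linarith)
      linarith
    have p1 : g₁ (1 / (lam - x)) = f₁ (1 / (lam - x)) := by
      apply hg₁f
      simp only [Set.mem_Ioi]
      have : 0 < 1 / (lam - x) := by positivity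
      linarith
    have p2 : g₂ (x - lam) = G (-x + lam) := congrArg G (by ring : -(x - lam) = -x + lam)
    have p3 : g₂ (1 / (lam - x)) = G (-1 / (lam - x)) :=
      congrArg G (by ring : -(1 / (lam - x)) = -1 / (lam - x))
    have p4 : f₁ (-(-1 / (lam - x))) = f₁ (1 / (lam - x)) :=
      congrArg f₁ (by ring : -(-1 / (lam - x)) = 1 / (lam - x))
    show G (-x) = _
    rw [hG']
    beta_reduce
    rw [p1, p2, p3, p4]
    ring
  refine ⟨g₁, g₂, ⟨hg₁c, hg₂c, hg₁f, hg₂f, hrel1, hrel2⟩, ?_⟩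
  intro g₁' g₂' hE'
  obtain ⟨hc1', hc2', he1', he2', hr1', hr2'⟩ := hE'
  constructor
  · apply hg₁uniq g₁' he1'
    intro x hx
    have hx' : -θp < x := hx
    have harg : -1 / (lam + x) < 1 :=
      lt_trans (div_neg_of_neg_of_pos (by norm_num) (hpos x hx')) one_pos
    rw [hr1' x hx, he2' (-1 / (lam + x)) (by simp only [Set.mem_Iio]; exact harg)]
  · intro x hx
    simp only [Set.mem_Iio] at hx
    have hGu := hGuniq (fun y => g₂' (-y)) ?_ ?_
    · have := hGu (-x) (by simp only [Set.mem_Ioi]; linarith)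
      rw [neg_neg] at this
      exact this
    · intro y hy
      simp only [Set.mem_Ioi] at hy
      exact he2' (-y) (by simp only [Set.mem_Iio]; linarith)
    · intro y hy
      simp only [Set.mem_Ioi] at hy
      have h2' := hr2' (-y) (by simp only [Set.mem_Iio]; linarith)
      rw [show lam - -y = lam + y from by ring] at h2'
      have hly : 0 < lam + y := hpos y hy
      have q1 : g₁' (1 / (lam + y)) = f₁ (1 / (lam + y)) := by
        apply he1'
        simp only [Set.mem_Ioi]
        have : 0 < 1 / (lam + y) := by positivity
        linarith
      beta_reduce
      rw [show -(-1 / (lam + y)) = 1 / (lam + y) from by ring,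
        show -(y + lam) = -y - lam from by ring]
      rw [h2', q1]
      ring
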